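/- Rockafellar–Uryasev equivalence of minimizations (Theorem 2.3): let R be an integrable ℝ^K-valued random vector, γ ∈ (0,1), and W := { u ∈ ℝ^K : u_i ≥ 0 for all i and Σ_i u_i = 1 } the simplex of long-only portfolios. Then inf_{u ∈ W} CVaR_γ(uᵀR) = inf_{(u,α) ∈ W × ℝ} F_γ(u, α); moreover a pair (u*, α*) minimizes F_γ over W × ℝ if and only if u* minimizes CVaR_γ(uᵀR) over W and α* minimizes α ↦ F_γ(u*, α) over ℝ. -/

import Mathlib

open MeasureTheory

/-- Value-at-risk of the return `X` at confidence level `β`: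
`VaR_β(X) = inf {x ∈ ℝ : ℙ(x + X < 0) ≤ 1 - β}`. -/
noncomputable def VaR {Ω : Type*} [MeasurableSpace Ω] (P : Measure Ω) (X : Ω → ℝ) (β : ℝ) : ℝ :=
  sInf {x : ℝ | (P {ω | x + X ω < 0}).toReal ≤ 1 - β}

/-- Conditional value-at-risk of the return `X` at confidence level `γ`:
`CVaR_γ(X) = (1/(1-γ)) ∫_γ^1 VaR_β(X) dβ`. -/
noncomputable def CVaR {Ω : Type*} [MeasurableSpace Ω] (P : Measure Ω) (X : Ω → ℝ) (γ : ℝ) : ℝ :=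
  (1 / (1 - γ)) * ∫ β in γ..1, VaR P X β


open Set Filter Topology
open scoped ENNReal

section CDF
variable {Ω : Type*} [MeasurableSpace Ω] (P : Measure Ω) [IsProbabilityMeasure P]
  (L : Ω → ℝ)
variable (hLm : Measurable L)
include hLm

lemma cdf_rc (x β : ℝ) (h : ∀ ε > (0:ℝ), β ≤ (P {ω | L ω ≤ x + ε}).toReal) :
    β ≤ (P {ω | L ω ≤ x}).toReal := by
  set s : ℕ → Set Ω := fun n => {ω | L ω ≤ x + 1/(n+1)} with hs
  have hsm : ∀ n, NullMeasurableSet (s n) P := fun n =>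
    (hLm measurableSet_Iic).nullMeasurableSet
  have hanti : Antitone s := by
    intro n m hnm ω hω
    simp only [hs, Set.mem_setOf_eq] at hω ⊢
    have hc : (n:ℝ) ≤ m := Nat.cast_le.mpr hnm
    have : (1:ℝ)/(m+1) ≤ 1/(n+1) := by
      apply one_div_le_one_div_of_le <;> linarith
    linarith
  have hint : (⋂ n, s n) = {ω | L ω ≤ x} := by
    ext ω
    simp only [Set.mem_iInter, hs, Set.mem_setOf_eq]
    constructor
    · intro hω
      by_contra hlt
      push_neg at hlt
      obtain ⟨n, hn⟩ := exists_nat_one_div_lt (sub_pos.mpr hlt)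
      have := hω n
      push_cast at hn this
      linarith
    · intro hω n
      have : (0:ℝ) < 1/(n+1) := by positivity
      linarith
  have htend : Tendsto (fun n => P (s n)) atTop (𝓝 (P {ω | L ω ≤ x})) := by
    have := tendsto_measure_iInter_atTop (μ := P) hsm hanti ⟨0, measure_ne_top _ _⟩
    rwa [hint] at this
  have hle : ∀ n, ENNReal.ofReal β ≤ P (s n) := by
    intro n
    have hε : (0:ℝ) < 1/(n+1) := by positivity
    have := h _ hε
    rwa [ENNReal.ofReal_le_iff_le_toReal (measure_ne_top _ _)]
  have : ENNReal.ofReal β ≤ P {ω | L ω ≤ x} := ge_of_tendsto htend (Eventually.of_forall hle)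
  rwa [ENNReal.ofReal_le_iff_le_toReal (measure_ne_top _ _)] at this

omit hLm in
lemma cdf_top (β : ℝ) (hβ : β < 1) : ∃ y : ℝ, β ≤ (P {ω | L ω ≤ y}).toReal := by
  set s : ℕ → Set Ω := fun n => {ω | L ω ≤ n} with hs
  have hmono : Monotone s := by
    intro n m hnm ω hω
    simp only [hs, Set.mem_setOf_eq] at hω ⊢
    exact hω.trans (Nat.cast_le.mpr hnm)
  have huniv : (⋃ n, s n) = Set.univ := by
    ext ω
    simp only [Set.mem_iUnion, hs, Set.mem_setOf_eq, Set.mem_univ, iff_true]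
    obtain ⟨n, hn⟩ := exists_nat_ge (L ω)
    exact ⟨n, hn⟩
  have htend : Tendsto (fun n => P (s n)) atTop (𝓝 1) := by
    have := tendsto_measure_iUnion_atTop (μ := P) hmono
    rwa [huniv, measure_univ] at this
  have : ∀ᶠ n in atTop, ENNReal.ofReal β < P (s n) :=
    htend.eventually_const_lt (ENNReal.ofReal_lt_one.mpr hβ)
  obtain ⟨n, hn⟩ := this.exists
  exact ⟨n, by
    have := hn.le
    rwa [ENNReal.ofReal_le_iff_le_toReal (measure_ne_top _ _)] at this⟩

lemma cdf_bot (β : ℝ) (hβ : 0 < β) : ∃ y : ℝ, (P {ω | L ω ≤ y}).toReal < β := by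
  set s : ℕ → Set Ω := fun n => {ω | L ω ≤ -(n:ℝ)} with hs
  have hsm : ∀ n, NullMeasurableSet (s n) P := fun n =>
    (hLm measurableSet_Iic).nullMeasurableSet
  have hanti : Antitone s := by
    intro n m hnm ω hω
    simp only [hs, Set.mem_setOf_eq] at hω ⊢
    have : (n:ℝ) ≤ m := Nat.cast_le.mpr hnm
    linarith
  have hempty : (⋂ n, s n) = ∅ := by
    ext ω
    simp only [Set.mem_iInter, hs, Set.mem_setOf_eq, Set.mem_empty_iff_false, iff_false]
    push_neg
    obtain ⟨n, hn⟩ := exists_nat_ge (-L ω)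
    refine ⟨n+1, by push_cast; linarith⟩
  have htend : Tendsto (fun n => P (s n)) atTop (𝓝 0) := by
    have := tendsto_measure_iInter_atTop (μ := P) hsm hanti ⟨0, measure_ne_top _ _⟩
    rwa [hempty, measure_empty] at this
  have : ∀ᶠ n in atTop, P (s n) < ENNReal.ofReal β :=
    htend.eventually_lt_const (ENNReal.ofReal_pos.mpr hβ)
  obtain ⟨n, hn⟩ := this.exists
  refine ⟨-(n:ℝ), ?_⟩
  have := ENNReal.toReal_lt_toReal (measure_ne_top _ _) ENNReal.ofReal_ne_top |>.mpr hn
  rw [ENNReal.toReal_ofReal hβ.le] at this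
  exact this

end CDF

section Core
variable {Ω : Type*} [MeasurableSpace Ω]

theorem RU_core (P : Measure Ω) [IsProbabilityMeasure P]
    (X : Ω → ℝ) (hXm : Measurable X) (hXi : Integrable X P)
    (γ : ℝ) (hγ : γ ∈ Set.Ioo (0:ℝ) 1) :
    CVaR P X γ = VaR P X γ + (1/(1-γ)) * ∫ ω, max (-X ω - VaR P X γ) 0 ∂P ∧
    ∀ α : ℝ, CVaR P X γ ≤ α + (1/(1-γ)) * ∫ ω, max (-X ω - α) 0 ∂P := by
  obtain ⟨hγ0, hγ1⟩ := hγ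
  have h1γ : (0:ℝ) < 1 - γ := by linarith
  set L : Ω → ℝ := fun ω => -X ω with hLdef
  have hLm : Measurable L := hXm.neg
  have hLi : Integrable L P := hXi.neg
  set F : ℝ → ℝ := fun x => (P {ω | L ω ≤ x}).toReal with hFdef
  have hF0 : ∀ x, 0 ≤ F x := fun x => ENNReal.toReal_nonneg
  have hF1 : ∀ x, F x ≤ 1 := by
    intro x
    have : P {ω | L ω ≤ x} ≤ 1 := prob_le_one
    calc F x ≤ (1 : ℝ≥0∞).toReal := ENNReal.toReal_mono ENNReal.one_ne_top this
    _ = 1 := by simp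
  have hFmono : Monotone F := by
    intro x y hxy
    exact ENNReal.toReal_mono (measure_ne_top _ _)
      (measure_mono fun ω hω => le_trans hω hxy)
  have hPofF : ∀ x, P {ω | L ω ≤ x} = ENNReal.ofReal (F x) := fun x =>
    (ENNReal.ofReal_toReal (measure_ne_top _ _)).symm
  have hmeasLe : ∀ x : ℝ, MeasurableSet {ω | L ω ≤ x} := fun x => hLm measurableSet_Iic
  have hPgt : ∀ x : ℝ, P {ω | x < L ω} = 1 - ENNReal.ofReal (F x) := by
    intro x
    have : {ω | x < L ω} = {ω | L ω ≤ x}ᶜ := by ext ω; simp [not_le]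
    rw [this, measure_compl (hmeasLe x) (measure_ne_top _ _), measure_univ, hPofF]
  have hPgt_toReal : ∀ x : ℝ, (P {ω | x < L ω}).toReal = 1 - F x := by
    intro x
    rw [hPgt]
    rw [ENNReal.toReal_sub_of_le (by simpa [hPofF] using prob_le_one (μ := P) (s := {ω | L ω ≤ x}))
      ENNReal.one_ne_top]
    simp [ENNReal.toReal_ofReal (hF0 x)]
  -- the quantile function
  set Q : ℝ → ℝ := fun β => sInf {y | β ≤ F y} with hQdef
  have hne : ∀ β < (1:ℝ), {y | β ≤ F y}.Nonempty := fun β hβ => cdf_top P L β hβ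
  have hbdd : ∀ β, 0 < β → BddBelow {y | β ≤ F y} := by
    intro β hβ
    obtain ⟨y₀, hy₀⟩ := cdf_bot P L hLm β hβ
    exact ⟨y₀, fun z hz => by
      by_contra hlt
      push_neg at hlt
      exact absurd (le_trans hz (hFmono hlt.le)) (not_le.mpr hy₀)⟩
  have hQle : ∀ β ∈ Set.Ioo (0:ℝ) 1, ∀ x, Q β ≤ x ↔ β ≤ F x := by
    rintro β ⟨hβ0, hβ1⟩ x
    constructor
    · intro h
      apply cdf_rc P L hLm
      intro ε hε
      obtain ⟨y, hy, hylt⟩ := exists_lt_of_csInf_lt (hne β hβ1) (show Q β < x + ε by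
        simp only [hQdef] at h ⊢; linarith)
      exact le_trans hy (hFmono hylt.le)
    · intro h
      exact csInf_le (hbdd β hβ0) h
  have hγIoo : γ ∈ Set.Ioo (0:ℝ) 1 := ⟨hγ0, hγ1⟩
  have hFQγ : γ ≤ F (Q γ) := (hQle γ hγIoo (Q γ)).mp le_rfl
  have hQmono : ∀ β ∈ Set.Ioo (0:ℝ) 1, γ ≤ β → Q γ ≤ Q β := by
    intro β hβ hγβ
    rw [hQle γ hγIoo]
    exact le_trans hγβ ((hQle β hβ (Q β)).mp le_rfl)
  -- VaR = Q
  have hVaR : ∀ β, VaR P X β = Q β := by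
    intro β
    unfold VaR
    congr 1
    ext x
    have hset : {ω | x + X ω < 0} = {ω | x < L ω} := by
      ext ω; simp only [Set.mem_setOf_eq, hLdef]; constructor <;> intro <;> linarith
    simp only [Set.mem_setOf_eq, hset, hPgt_toReal]
    constructor <;> intro <;> linarith
  -- integrability of loss parts
  have hmax : ∀ α : ℝ, Integrable (fun ω => max (L ω - α) 0) P := fun α =>
    (hLi.sub (integrable_const α)).pos_part
  set E : ℝ → ℝ := fun α => ∫ ω, max (L ω - α) 0 ∂P with hEdef
  have hEX : ∀ α, (∫ ω, max (-X ω - α) 0 ∂P) = E α := fun α => rfl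
  have hIooSub : Set.Ioo γ 1 ⊆ Set.Ioo (0:ℝ) 1 := fun β hβ => ⟨lt_trans hγ0 hβ.1, hβ.2⟩
  -- measurability of the quantile function on (γ,1)
  set Qp : ℝ → ℝ := (Set.Ioo γ 1).piecewise (fun β => Q β - Q γ) (fun _ => 0) with hQp
  have hQpm : Measurable Qp := by
    apply measurable_of_Iic
    intro x
    have hset : Qp ⁻¹' Set.Iic x =
        (Set.Ioo γ 1 ∩ Set.Iic (F (x + Q γ))) ∪ ((Set.Ioo γ 1)ᶜ ∩ {β : ℝ | (0:ℝ) ≤ x}) := by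
      ext β
      by_cases hβ : β ∈ Set.Ioo γ 1
      · have hβ' := hIooSub hβ
        simp only [Set.mem_preimage, hQp, Set.piecewise_eq_of_mem _ _ _ hβ, Set.mem_Iic,
          Set.mem_union, Set.mem_inter_iff, Set.mem_compl_iff, hβ, not_true_eq_false,
          false_and, or_false, true_and, Set.mem_setOf_eq]
        rw [show (Q β - Q γ ≤ x) ↔ (Q β ≤ x + Q γ) by constructor <;> intro <;> linarith]
        exact hQle β hβ' (x + Q γ)
      · simp only [Set.mem_preimage, hQp, Set.piecewise_eq_of_notMem _ _ _ hβ, Set.mem_Iic,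
          Set.mem_union, Set.mem_inter_iff, Set.mem_compl_iff, hβ, not_false_eq_true,
          true_and, false_and, false_or, Set.mem_setOf_eq]
    rw [hset]
    exact ((measurableSet_Ioo.inter measurableSet_Iic).union
      (measurableSet_Ioo.compl.inter (MeasurableSet.const _)))
  have hQae : (fun β => Q β - Q γ) =ᵐ[volume.restrict (Set.Ioo γ 1)] Qp := by
    filter_upwards [ae_restrict_mem measurableSet_Ioo] with β hβ
    simp [hQp, Set.piecewise_eq_of_mem _ _ _ hβ]
  have hQaem : AEMeasurable (fun β => Q β - Q γ) (volume.restrict (Set.Ioo γ 1)) :=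
    hQpm.aemeasurable.congr hQae.symm
  have hQnn : 0 ≤ᵐ[volume.restrict (Set.Ioo γ 1)] fun β => Q β - Q γ := by
    filter_upwards [ae_restrict_mem measurableSet_Ioo] with β hβ
    exact sub_nonneg.2 (hQmono β (hIooSub hβ) hβ.1.le)
  -- layer cake on both sides
  have lcβ : ∫⁻ β in Set.Ioo γ 1, ENNReal.ofReal (Q β - Q γ) =
      ∫⁻ t in Set.Ioi 0, (volume.restrict (Set.Ioo γ 1)) {β | t < Q β - Q γ} :=
    lintegral_eq_lintegral_meas_lt _ hQnn hQaem
  have lcΩ : ∫⁻ ω, ENNReal.ofReal (max (L ω - Q γ) 0) ∂P =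
      ∫⁻ t in Set.Ioi 0, P {ω | t < max (L ω - Q γ) 0} :=
    lintegral_eq_lintegral_meas_lt P (Eventually.of_forall fun ω => le_max_right _ _)
      ((hLm.sub measurable_const).max measurable_const).aemeasurable
  have hslice : ∀ t ∈ Set.Ioi (0:ℝ),
      (volume.restrict (Set.Ioo γ 1)) {β | t < Q β - Q γ}
        = P {ω | t < max (L ω - Q γ) 0} := by
    intro t ht
    have ht' : (0:ℝ) < t := ht
    have hγF : γ ≤ F (Q γ + t) := le_trans hFQγ (hFmono (by linarith))
    rw [Measure.restrict_apply' measurableSet_Ioo]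
    have h1 : {β : ℝ | t < Q β - Q γ} ∩ Set.Ioo γ 1 = Set.Ioo (F (Q γ + t)) 1 := by
      ext β
      simp only [Set.mem_inter_iff, Set.mem_setOf_eq, Set.mem_Ioo]
      constructor
      · rintro ⟨h1, h2, h3⟩
        refine ⟨?_, h3⟩
        by_contra hle
        push_neg at hle
        have : Q β ≤ Q γ + t := (hQle β (hIooSub ⟨h2, h3⟩) _).mpr hle
        linarith
      · rintro ⟨h1, h2⟩
        have hγβ : γ < β := lt_of_le_of_lt hγF h1
        have hβIoo : β ∈ Set.Ioo (0:ℝ) 1 := ⟨lt_trans hγ0 hγβ, h2⟩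
        have hnle : ¬ (Q β ≤ Q γ + t) := by
          rw [hQle β hβIoo]; exact not_le.mpr h1
        push_neg at hnle
        exact ⟨by linarith, hγβ, h2⟩
    have h2 : {ω | t < max (L ω - Q γ) 0} = {ω | Q γ + t < L ω} := by
      ext ω
      simp only [Set.mem_setOf_eq]
      constructor
      · intro h
        rcases le_or_gt (L ω - Q γ) 0 with h' | h'
        · rw [max_eq_right h'] at h; linarith
        · rw [max_eq_left h'.le] at h; linarith
      · intro h
        have : t < L ω - Q γ := by linarith
        exact lt_of_lt_of_le this (le_max_left _ _)
    rw [h1, h2, hPgt, Real.volume_Ioo, ← ENNReal.ofReal_one,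
      ← ENNReal.ofReal_sub 1 (hF0 _)]
  have hts : ∫⁻ t in Set.Ioi 0, (volume.restrict (Set.Ioo γ 1)) {β | t < Q β - Q γ}
      = ∫⁻ t in Set.Ioi 0, P {ω | t < max (L ω - Q γ) 0} :=
    setLIntegral_congr_fun measurableSet_Ioi hslice
  have hkeyL : ∫⁻ β in Set.Ioo γ 1, ENNReal.ofReal (Q β - Q γ) =
      ∫⁻ ω, ENNReal.ofReal (max (L ω - Q γ) 0) ∂P := by
    rw [lcβ, hts, ← lcΩ]
  -- from lintegral equality to real integral equality
  have hΩfin : ∫⁻ ω, ENNReal.ofReal (max (L ω - Q γ) 0) ∂P < ⊤ :=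
    (hasFiniteIntegral_iff_ofReal (Eventually.of_forall fun ω => le_max_right _ _)).mp
      (hmax (Q γ)).hasFiniteIntegral
  have hfint : Integrable (fun β => Q β - Q γ) (volume.restrict (Set.Ioo γ 1)) := by
    refine ⟨hQaem.aestronglyMeasurable, ?_⟩
    rw [hasFiniteIntegral_iff_ofReal hQnn, hkeyL]
    exact hΩfin
  have hEQ : ∫ β in Set.Ioo γ 1, (Q β - Q γ) = E (Q γ) := by
    have h1 := integral_eq_lintegral_of_nonneg_ae hQnn hQaem.aestronglyMeasurable
    have h2 := integral_eq_lintegral_of_nonneg_ae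
      (Eventually.of_forall fun ω => le_max_right (L ω - Q γ) 0)
      (hmax (Q γ)).aestronglyMeasurable
    show _ = ∫ ω, max (L ω - Q γ) 0 ∂P
    rw [h1, h2, hkeyL]
  have hQint : IntegrableOn Q (Set.Ioo γ 1) volume := by
    have h := hfint.add (integrable_const (Q γ))
    have heq : ((fun β => Q β - Q γ) + fun _ => Q γ) = Q := by
      ext β; simp
    rwa [heq] at h
  have hIooInt : ∫ β in Set.Ioo γ 1, Q β = (1-γ) * Q γ + E (Q γ) := by
    have h : ∫ β in Set.Ioo γ 1, Q β = ∫ β in Set.Ioo γ 1, ((Q β - Q γ) + Q γ) := by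
      congr 1; ext β; ring
    rw [h, integral_add hfint (integrable_const _), hEQ, setIntegral_const,
      measureReal_def, Real.volume_Ioo, ENNReal.toReal_ofReal (by linarith), smul_eq_mul]
    ring
  have hCV : CVaR P X γ = Q γ + (1/(1-γ)) * E (Q γ) := by
    unfold CVaR
    rw [intervalIntegral.integral_of_le hγ1.le, integral_Ioc_eq_integral_Ioo]
    simp only [hVaR]
    rw [hIooInt]
    field_simp
  -- probability bounds at the quantile
  have hPgtQγ : (P {ω | Q γ < L ω}).toReal ≤ 1 - γ := by
    rw [hPgt_toReal]; linarith
  have hPgeQγ : 1 - γ ≤ (P {ω | Q γ ≤ L ω}).toReal := by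
    have hlt : P {ω | L ω < Q γ} ≤ ENNReal.ofReal γ := by
      set s : ℕ → Set Ω := fun n => {ω | L ω ≤ Q γ - 1/(n+1)} with hs
      have hmono : Monotone s := by
        intro n m hnm ω hω
        simp only [hs, Set.mem_setOf_eq] at hω ⊢
        have hc : (n:ℝ) ≤ m := Nat.cast_le.mpr hnm
        have : (1:ℝ)/(m+1) ≤ 1/(n+1) := by
          apply one_div_le_one_div_of_le <;> linarith
        linarith
      have hunion : (⋃ n, s n) = {ω | L ω < Q γ} := by
        ext ω
        simp only [Set.mem_iUnion, hs, Set.mem_setOf_eq]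
        constructor
        · rintro ⟨n, hn⟩
          have hpos : (0:ℝ) < 1/((n:ℝ)+1) := by positivity
          exact lt_of_le_of_lt hn (by linarith)
        · intro hω
          obtain ⟨n, hn⟩ := exists_nat_one_div_lt (sub_pos.mpr hω)
          exact ⟨n, by push_cast at hn ⊢; linarith⟩
      have htend := tendsto_measure_iUnion_atTop (μ := P) hmono
      rw [hunion] at htend
      apply le_of_tendsto htend
      apply Eventually.of_forall
      intro n
      show P (s n) ≤ _
      rw [hs]
      simp only
      rw [hPofF]
      apply ENNReal.ofReal_le_ofReal
      by_contra h
      push_neg at h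
      have h2 : Q γ ≤ Q γ - 1/(n+1) := (hQle γ hγIoo _).mpr h.le
      have h3 : (0:ℝ) < 1/(n+1) := by positivity
      linarith
    have hcompl : {ω | Q γ ≤ L ω} = {ω | L ω < Q γ}ᶜ := by
      ext ω; simp [not_lt]
    have hmLt : MeasurableSet {ω | L ω < Q γ} := hLm measurableSet_Iio
    rw [hcompl, measure_compl hmLt (measure_ne_top _ _), measure_univ,
      ENNReal.toReal_sub_of_le prob_le_one ENNReal.one_ne_top]
    have h4 : (P {ω | L ω < Q γ}).toReal ≤ γ := by
      have := ENNReal.toReal_mono ENNReal.ofReal_ne_top hlt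
      rwa [ENNReal.toReal_ofReal hγ0.le] at this
    simp only [ENNReal.toReal_one]
    linarith
  -- the minimization inequality
  have hmain : ∀ α, Q γ + (1/(1-γ)) * E (Q γ) ≤ α + (1/(1-γ)) * E α := by
    intro α
    have hcpos : (0:ℝ) < 1/(1-γ) := by positivity
    have hc1γ : (1/(1-γ)) * (1 - γ) = 1 := by field_simp
    rcases le_or_gt (Q γ) α with hcase | hcase
    · have hind : Integrable ({ω | Q γ < L ω}.indicator fun _ => (α - Q γ)) P :=
        (integrable_const _).indicator (hLm measurableSet_Ioi)
      have hpt : ∀ ω, max (L ω - Q γ) 0 ≤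
          max (L ω - α) 0 + {ω | Q γ < L ω}.indicator (fun _ => (α - Q γ)) ω := by
        intro ω
        by_cases hω : Q γ < L ω
        · rw [Set.indicator_of_mem (show ω ∈ {ω | Q γ < L ω} from hω)]
          have h1 : max (L ω - Q γ) 0 = L ω - Q γ := max_eq_left (by linarith)
          have h2 : L ω - α ≤ max (L ω - α) 0 := le_max_left _ _
          linarith
        · push_neg at hω
          rw [Set.indicator_of_notMem (show ω ∉ {ω | Q γ < L ω} from not_lt.mpr hω)]
          have h1 : max (L ω - Q γ) 0 = 0 := max_eq_right (by linarith)
          have h2 : (0:ℝ) ≤ max (L ω - α) 0 := le_max_right _ _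
          linarith
      have hint := integral_mono (hmax (Q γ)) ((hmax α).add hind) hpt
      simp only [Pi.add_apply] at hint
      rw [integral_add (hmax α) hind,
        integral_indicator (show MeasurableSet {ω | Q γ < L ω} from hLm measurableSet_Ioi),
        setIntegral_const, measureReal_def] at hint
      have h5 : (P {ω | Q γ < L ω}).toReal * (α - Q γ) ≤ (1-γ) * (α - Q γ) :=
        mul_le_mul_of_nonneg_right hPgtQγ (by linarith)
      have hE5 : E (Q γ) ≤ E α + (1-γ)*(α - Q γ) := by
        rw [hEdef]
        simp only [smul_eq_mul] at hint
        calc (∫ ω, max (L ω - Q γ) 0 ∂P)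
            ≤ (∫ ω, max (L ω - α) 0 ∂P) + (P {ω | Q γ < L ω}).toReal * (α - Q γ) := hint
          _ ≤ (∫ ω, max (L ω - α) 0 ∂P) + (1-γ)*(α - Q γ) := by linarith
      have h6 := mul_le_mul_of_nonneg_left hE5 hcpos.le
      have h7 : (1/(1-γ)) * (E α + (1-γ)*(α - Q γ))
          = (1/(1-γ)) * E α + (α - Q γ) := by
        field_simp
      rw [h7] at h6
      linarith
    · have hind : Integrable ({ω | Q γ ≤ L ω}.indicator fun _ => (Q γ - α)) P :=
        (integrable_const _).indicator (hLm measurableSet_Ici)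
      have hpt : ∀ ω, max (L ω - Q γ) 0 + {ω | Q γ ≤ L ω}.indicator (fun _ => (Q γ - α)) ω
          ≤ max (L ω - α) 0 := by
        intro ω
        by_cases hω : Q γ ≤ L ω
        · rw [Set.indicator_of_mem (show ω ∈ {ω | Q γ ≤ L ω} from hω)]
          have h1 : max (L ω - Q γ) 0 = L ω - Q γ := max_eq_left (by linarith)
          have h2 : max (L ω - α) 0 = L ω - α := max_eq_left (by linarith)
          linarith
        · push_neg at hω
          rw [Set.indicator_of_notMem (show ω ∉ {ω | Q γ ≤ L ω} from not_le.mpr hω)]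
          have h1 : max (L ω - Q γ) 0 = 0 := max_eq_right (by linarith)
          have h2 : (0:ℝ) ≤ max (L ω - α) 0 := le_max_right _ _
          linarith
      have hint := integral_mono ((hmax (Q γ)).add hind) (hmax α) hpt
      simp only [Pi.add_apply] at hint
      rw [integral_add (hmax (Q γ)) hind,
        integral_indicator (show MeasurableSet {ω | Q γ ≤ L ω} from hLm measurableSet_Ici),
        setIntegral_const, measureReal_def] at hint
      have h5 : (1-γ) * (Q γ - α) ≤ (P {ω | Q γ ≤ L ω}).toReal * (Q γ - α) :=
        mul_le_mul_of_nonneg_right hPgeQγ (by linarith)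
      have hE5 : E (Q γ) + (1-γ)*(Q γ - α) ≤ E α := by
        rw [hEdef]
        simp only [smul_eq_mul] at hint
        linarith
      have h6 := mul_le_mul_of_nonneg_left hE5 hcpos.le
      have h7 : (1/(1-γ)) * (E (Q γ) + (1-γ)*(Q γ - α))
          = (1/(1-γ)) * E (Q γ) + (Q γ - α) := by
        field_simp
      rw [h7] at h6
      linarith
  constructor
  · rw [hVaR γ, hEX, hCV]
  · intro α
    rw [hEX, hCV]
    exact hmain α
end Core

section Main
variable {Ω : Type*} [MeasurableSpace Ω]

theorem RU_key (P : Measure Ω) [IsProbabilityMeasure P]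
    (X : Ω → ℝ) (hXi : Integrable X P)
    (γ : ℝ) (hγ : γ ∈ Set.Ioo (0:ℝ) 1) :
    CVaR P X γ = VaR P X γ + (1/(1-γ)) * ∫ ω, max (-X ω - VaR P X γ) 0 ∂P ∧
    ∀ α : ℝ, CVaR P X γ ≤ α + (1/(1-γ)) * ∫ ω, max (-X ω - α) 0 ∂P := by
  set Y := hXi.aestronglyMeasurable.mk X with hY
  have hYm : Measurable Y := hXi.aestronglyMeasurable.stronglyMeasurable_mk.measurable
  have hae : X =ᵐ[P] Y := hXi.aestronglyMeasurable.ae_eq_mk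
  have hYi : Integrable Y P := hXi.congr hae
  have hPeq : ∀ x : ℝ, P {ω | x + X ω < 0} = P {ω | x + Y ω < 0} := by
    intro x
    apply measure_congr
    filter_upwards [hae] with ω h
    show (x + X ω < 0) = (x + Y ω < 0)
    rw [h]
  have hVaReq : ∀ β, VaR P X β = VaR P Y β := by
    intro β
    unfold VaR
    simp only [hPeq]
  have hCVaReq : CVaR P X γ = CVaR P Y γ := by
    unfold CVaR
    congr 1
    apply intervalIntegral.integral_congr
    intro β _
    exact hVaReq β
  have hInteq : ∀ α : ℝ, (∫ ω, max (-X ω - α) 0 ∂P) = ∫ ω, max (-Y ω - α) 0 ∂P := by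
    intro α
    apply integral_congr_ae
    filter_upwards [hae] with ω h
    rw [h]
  obtain ⟨h1, h2⟩ := RU_core P Y hYm hYi γ hγ
  constructor
  · rw [hCVaReq, hVaReq γ, hInteq]
    exact h1
  · intro α
    rw [hCVaReq, hInteq]
    exact h2 α

theorem RU_minimization_equivalence' (P : Measure Ω) [IsProbabilityMeasure P] {K : ℕ}
    (R : Ω → Fin K → ℝ) (hR : ∀ i, Integrable (fun ω => R ω i) P)
    (γ : ℝ) (hγ : γ ∈ Set.Ioo (0 : ℝ) 1)
    (W : Set (Fin K → ℝ)) (hW : W = {u | (∀ i, 0 ≤ u i) ∧ ∑ i, u i = 1})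
    (F : (Fin K → ℝ) → ℝ → ℝ)
    (hF : F = fun u α => α + (1 / (1 - γ)) * ∫ ω, max (-(∑ i, u i * R ω i) - α) 0 ∂P) :
    sInf ((fun u => CVaR P (fun ω => ∑ i, u i * R ω i) γ) '' W)
        = sInf {v | ∃ u ∈ W, ∃ α : ℝ, v = F u α} ∧
      ∀ ustar ∈ W, ∀ αstar : ℝ,
        ((∀ u ∈ W, ∀ α : ℝ, F ustar αstar ≤ F u α) ↔
          ((∀ u ∈ W, CVaR P (fun ω => ∑ i, ustar i * R ω i) γ
              ≤ CVaR P (fun ω => ∑ i, u i * R ω i) γ) ∧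
            ∀ α : ℝ, F ustar αstar ≤ F ustar α)) := by
  have hXi : ∀ u : Fin K → ℝ, Integrable (fun ω => ∑ i, u i * R ω i) P := by
    intro u
    apply integrable_finset_sum
    intro i _
    exact (hR i).const_mul (u i)
  set g : (Fin K → ℝ) → ℝ := fun u => CVaR P (fun ω => ∑ i, u i * R ω i) γ with hg
  set a : (Fin K → ℝ) → ℝ := fun u => VaR P (fun ω => ∑ i, u i * R ω i) γ with ha
  have key : ∀ u : Fin K → ℝ, g u = F u (a u) ∧ ∀ α, g u ≤ F u α := by
    intro u
    obtain ⟨h1, h2⟩ := RU_key P (fun ω => ∑ i, u i * R ω i) (hXi u) γ hγ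
    rw [hF]
    exact ⟨h1, h2⟩
  constructor
  · set A := g '' W with hA
    set B := {v | ∃ u ∈ W, ∃ α : ℝ, v = F u α} with hB
    have hAB : A ⊆ B := by
      rintro _ ⟨u, hu, rfl⟩
      exact ⟨u, hu, a u, (key u).1⟩
    have hdom : ∀ b ∈ B, ∃ c ∈ A, c ≤ b := by
      rintro b ⟨u, hu, α, rfl⟩
      exact ⟨g u, ⟨u, hu, rfl⟩, (key u).2 α⟩
    rcases eq_or_ne A ∅ with hAe | hAe
    · have hWe : W = ∅ := by
        by_contra hne
        obtain ⟨u, hu⟩ := Set.nonempty_iff_ne_empty.mpr hne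
        exact absurd hAe (Set.nonempty_iff_ne_empty.mp ⟨g u, u, hu, rfl⟩)
      have hBe : B = ∅ := by
        rw [hB, hWe]
        ext v
        simp
      rw [hAe, hBe]
    · have hAne : A.Nonempty := Set.nonempty_iff_ne_empty.mpr hAe
      have hBne : B.Nonempty := hAne.mono hAB
      by_cases hbdd : BddBelow A
      · have hBbdd : BddBelow B := by
          obtain ⟨m, hm⟩ := hbdd
          refine ⟨m, fun b hb => ?_⟩
          obtain ⟨c, hc, hcb⟩ := hdom b hb
          exact (hm hc).trans hcb
        apply le_antisymm
        · apply le_csInf hBne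
          intro b hb
          obtain ⟨c, hc, hcb⟩ := hdom b hb
          exact (csInf_le hbdd hc).trans hcb
        · exact csInf_le_csInf hBbdd hAne hAB
      · have hBbdd : ¬ BddBelow B := fun h => hbdd (h.mono hAB)
        rw [Real.sInf_of_not_bddBelow hbdd, Real.sInf_of_not_bddBelow hBbdd]
  · intro us hus αs
    constructor
    · intro h
      refine ⟨fun u hu => ?_, fun α => h us hus α⟩
      calc g us ≤ F us αs := (key us).2 αs
        _ ≤ F u (a u) := h u hu _
        _ = g u := ((key u).1).symm
    · rintro ⟨h1, h2⟩ u hu α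
      calc F us αs ≤ F us (a us) := h2 _
        _ = g us := ((key us).1).symm
        _ ≤ g u := h1 u hu
        _ ≤ F u α := (key u).2 α
end Main

/-- Rockafellar–Uryasev equivalence of minimizations: over the simplex `W` of long-only
portfolios, `inf_{u ∈ W} CVaR_γ(uᵀR) = inf_{(u,α) ∈ W × ℝ} F_γ(u, α)`; moreover `(u*, α*)`
minimizes `F_γ` over `W × ℝ` iff `u*` minimizes `CVaR_γ(uᵀR)` over `W` and `α*` minimizes
`α ↦ F_γ(u*, α)` over `ℝ`. -/
theorem RU_minimization_equivalence {Ω : Type*} [MeasurableSpace Ω]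
    (P : Measure Ω) [IsProbabilityMeasure P] {K : ℕ}
    (R : Ω → Fin K → ℝ) (hR : ∀ i, Integrable (fun ω => R ω i) P)
    (γ : ℝ) (hγ : γ ∈ Set.Ioo (0 : ℝ) 1)
    (W : Set (Fin K → ℝ)) (hW : W = {u | (∀ i, 0 ≤ u i) ∧ ∑ i, u i = 1})
    (F : (Fin K → ℝ) → ℝ → ℝ)
    (hF : F = fun u α => α + (1 / (1 - γ)) * ∫ ω, max (-(∑ i, u i * R ω i) - α) 0 ∂P) :
    sInf ((fun u => CVaR P (fun ω => ∑ i, u i * R ω i) γ) '' W)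
        = sInf {v | ∃ u ∈ W, ∃ α : ℝ, v = F u α} ∧
      ∀ ustar ∈ W, ∀ αstar : ℝ,
        ((∀ u ∈ W, ∀ α : ℝ, F ustar αstar ≤ F u α) ↔
          ((∀ u ∈ W, CVaR P (fun ω => ∑ i, ustar i * R ω i) γ
              ≤ CVaR P (fun ω => ∑ i, u i * R ω i) γ) ∧
            ∀ α : ℝ, F ustar αstar ≤ F ustar α)) :=
  RU_minimization_equivalence' P R hR γ hγ W hW F hF
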